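/- Let k ≥ 3 be odd and n ≥ 6. Then mp^k(K_n) = n − 1, i.e., for every set F of at most n−2 edges, K_n − F has a perfect or almost perfect integer k-matching, and there is a set of n−1 edges (all edges at one vertex) whose removal destroys both. -/

import Mathlib

open SimpleGraph Finset

namespace IntKM

variable {V : Type*}

/-- Sum of edge weights over edges incident to `v`. -/
def vsum [Fintype V] [DecidableEq V] (h : Sym2 V → ℕ) (v : V) : ℕ :=
  ∑ e ∈ Finset.univ.filter (fun e => v ∈ e), h e

/-- `h` is an integer `k`-matching of `G`. -/
def IsIntKMatching [Fintype V] [DecidableEq V] (G : SimpleGraph V) (k : ℕ)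
    (h : Sym2 V → ℕ) : Prop :=
  (∀ e, h e ≤ k) ∧ (∀ e, e ∉ G.edgeSet → h e = 0) ∧ ∀ v, vsum h v ≤ k

/-- `G` has a perfect integer `k`-matching. -/
def HasPerfect [Fintype V] [DecidableEq V] (G : SimpleGraph V) (k : ℕ) : Prop :=
  ∃ h : Sym2 V → ℕ, IsIntKMatching G k h ∧ ∀ v, vsum h v = k

/-- `G` has an almost perfect integer `k`-matching. -/
def HasAlmost [Fintype V] [DecidableEq V] (G : SimpleGraph V) (k : ℕ) : Prop :=
  ∃ h : Sym2 V → ℕ, IsIntKMatching G k h ∧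
    ∃ v' : V, vsum h v' = k - 1 ∧ ∀ v, v ≠ v' → vsum h v = k

/-- `M` is a matching (a set of pairwise non-adjacent edges) of `G`. -/
def IsMatchingSet (G : SimpleGraph V) (M : Finset (Sym2 V)) : Prop :=
  ↑M ⊆ G.edgeSet ∧ ∀ e₁ ∈ M, ∀ e₂ ∈ M, e₁ ≠ e₂ → ∀ v : V, v ∈ e₁ → v ∉ e₂

/-- `G` has a perfect matching. -/
def HasPerfectM (G : SimpleGraph V) : Prop :=
  ∃ M : Finset (Sym2 V), IsMatchingSet G M ∧ ∀ v : V, ∃ e ∈ M, v ∈ e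

/-- `G` has an almost perfect matching. -/
def HasAlmostM (G : SimpleGraph V) : Prop :=
  ∃ M : Finset (Sym2 V), IsMatchingSet G M ∧
    ∃ v' : V, (∀ e ∈ M, v' ∉ e) ∧ ∀ v : V, v ≠ v' → ∃ e ∈ M, v ∈ e

/-- Integer `k`-matching preclusion number `mp^k(G)`. -/
noncomputable def mpk [Fintype V] [DecidableEq V] (G : SimpleGraph V) (k : ℕ) : ℕ :=
  sInf {n | ∃ F : Finset (Sym2 V), ↑F ⊆ G.edgeSet ∧ F.card = n ∧
    ¬ HasPerfect (G.deleteEdges ↑F) k ∧ ¬ HasAlmost (G.deleteEdges ↑F) k}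

/-- Strong integer `k`-matching preclusion number `smp^k(G)`. -/
noncomputable def smpk [Fintype V] [DecidableEq V] (G : SimpleGraph V) (k : ℕ) : ℕ :=
  sInf {n | ∃ (S : Finset V) (F : Finset (Sym2 V)), ↑F ⊆ G.edgeSet ∧ S.card + F.card = n ∧
    ¬ HasPerfect ((G.deleteEdges ↑F).induce ((↑(Sᶜ) : Set V))) k ∧
    ¬ HasAlmost ((G.deleteEdges ↑F).induce ((↑(Sᶜ) : Set V))) k}

/-- Matching preclusion number `mp(G)`. -/
noncomputable def mp [Fintype V] [DecidableEq V] (G : SimpleGraph V) : ℕ :=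
  sInf {n | ∃ F : Finset (Sym2 V), ↑F ⊆ G.edgeSet ∧ F.card = n ∧
    ¬ HasPerfectM (G.deleteEdges ↑F) ∧ ¬ HasAlmostM (G.deleteEdges ↑F)}

/-- Strong matching preclusion number `smp(G)`. -/
noncomputable def smp [Fintype V] [DecidableEq V] (G : SimpleGraph V) : ℕ :=
  sInf {n | ∃ (S : Finset V) (F : Finset (Sym2 V)), ↑F ⊆ G.edgeSet ∧ S.card + F.card = n ∧
    ¬ HasPerfectM ((G.deleteEdges ↑F).induce ((↑(Sᶜ) : Set V))) ∧
    ¬ HasAlmostM ((G.deleteEdges ↑F).induce ((↑(Sᶜ) : Set V)))}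

/-- Number of odd components with at least three vertices. -/
noncomputable def oddBigComponents {W : Type*} (H : SimpleGraph W) : ℕ :=
  Nat.card {c : H.ConnectedComponent // Odd (Nat.card c.supp) ∧ 3 ≤ Nat.card c.supp}

/-- Number of isolated vertices (components with exactly one vertex). -/
noncomputable def isolatedCount {W : Type*} (H : SimpleGraph W) : ℕ :=
  Nat.card {c : H.ConnectedComponent // Nat.card c.supp = 1}

/-- Total weight of an edge-weight function. -/
def totalWeight [Fintype V] [DecidableEq V] (h : Sym2 V → ℕ) : ℕ :=
  ∑ e : Sym2 V, h e

/-- Integer `k`-matching number `μ_k(G)`. -/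
noncomputable def intKMatchingNumber [Fintype V] [DecidableEq V]
    (G : SimpleGraph V) (k : ℕ) : ℕ :=
  sSup {w | ∃ h : Sym2 V → ℕ, IsIntKMatching G k h ∧ totalWeight h = w}

/-- Matching number `μ(G)`. -/
noncomputable def matchingNumber [Fintype V] [DecidableEq V] (G : SimpleGraph V) : ℕ :=
  sSup {n | ∃ M : Finset (Sym2 V), IsMatchingSet G M ∧ M.card = n}

end IntKM

open IntKM

namespace KMaux
open IntKM
set_option linter.unusedSectionVars false
variable {V : Type*} [Fintype V] [DecidableEq V]

lemma vsum_add (f g : Sym2 V → ℕ) (v : V) :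
    vsum (fun e => f e + g e) v = vsum f v + vsum g v := by
  simp [vsum, Finset.sum_add_distrib]

lemma vsum_zero (v : V) : vsum (fun _ => 0) v = 0 := by simp [vsum]

lemma vsum_eq_zero_of (h : Sym2 V → ℕ) (v : V) (hs : ∀ e, h e ≠ 0 → v ∉ e) :
    vsum h v = 0 := by
  refine Finset.sum_eq_zero fun e he => ?_
  by_contra hne
  exact hs e hne (Finset.mem_filter.mp he).2

def single (e₀ : Sym2 V) (c : ℕ) : Sym2 V → ℕ := fun e => if e = e₀ then c else 0

lemma vsum_single (e₀ : Sym2 V) (c : ℕ) (v : V) :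
    vsum (single e₀ c) v = if v ∈ e₀ then c else 0 := by
  classical
  simp only [vsum, single]
  rw [Finset.sum_ite_eq' _ e₀ (fun _ => c)]
  simp

/-- chain of weighted edges -/
def chainFn : List (Sym2 V × ℕ) → Sym2 V → ℕ
  | [] => fun _ => 0
  | p :: l => fun e => if e = p.1 then p.2 else chainFn l e

omit [Fintype V] in
lemma chainFn_eq_zero (l : List (Sym2 V × ℕ)) (e : Sym2 V) (he : e ∉ l.map Prod.fst) :
    chainFn l e = 0 := by
  induction l with
  | nil => rfl
  | cons p l ih =>
    simp only [List.map_cons, List.mem_cons] at he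
    push_neg at he
    simp [chainFn, he.1, ih he.2]

omit [Fintype V] in
lemma chainFn_cons (p : Sym2 V × ℕ) (l : List (Sym2 V × ℕ)) (hp : p.1 ∉ l.map Prod.fst) :
    chainFn (p :: l) = fun e => single p.1 p.2 e + chainFn l e := by
  funext e
  by_cases he : e = p.1
  · subst he; simp [chainFn, single, chainFn_eq_zero l _ hp]
  · simp [chainFn, single, he]

lemma vsum_chainFn (l : List (Sym2 V × ℕ)) (hl : (l.map Prod.fst).Nodup) (v : V) :
    vsum (chainFn l) v = ((l.filter (fun p => v ∈ p.1)).map Prod.snd).sum := by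
  induction l with
  | nil => simp [chainFn, vsum_zero]
  | cons p l ih =>
    simp only [List.map_cons, List.nodup_cons] at hl
    rw [chainFn_cons p l hl.1, vsum_add, vsum_single, ih hl.2]
    by_cases hv : v ∈ p.1 <;> simp [hv, List.filter_cons]

omit [Fintype V] in
lemma chainFn_le (l : List (Sym2 V × ℕ)) (k : ℕ) (hk : ∀ p ∈ l, p.2 ≤ k) (e : Sym2 V) :
    chainFn l e ≤ k := by
  induction l with
  | nil => simp [chainFn]
  | cons p l ih =>
    simp only [chainFn]
    split
    · exact hk p (by simp)
    · exact ih fun q hq => hk q (by simp [hq])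

omit [Fintype V] in
lemma chainFn_support (l : List (Sym2 V × ℕ)) (e : Sym2 V) (h : chainFn l e ≠ 0) :
    e ∈ l.map Prod.fst := by
  by_contra hc
  exact h (chainFn_eq_zero l e hc)


/-- edges of F lying inside s -/
def Fin' (F : Finset (Sym2 V)) (s : Finset V) : Finset (Sym2 V) :=
  F.filter (fun e => ∀ x ∈ e, x ∈ s)

omit [Fintype V] in
lemma pick_avoid (s T : Finset V) (h : T.card < s.card) : ∃ v ∈ s, v ∉ T := by
  by_contra hc
  push_neg at hc
  exact absurd (Finset.card_le_card hc) (Nat.not_le.mpr h)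

/-- F-neighbours of u inside s -/
def nbrs (F : Finset (Sym2 V)) (s : Finset V) (u : V) : Finset V :=
  s.filter (fun x => s(u,x) ∈ F ∧ x ≠ u)

lemma nbrs_card_le (F : Finset (Sym2 V)) (s : Finset V) (u : V) (hu : u ∈ s) :
    (nbrs F s u).card ≤ (Fin' F s).card := by
  apply Finset.card_le_card_of_injOn (fun x => s(u,x))
  · intro x hx
    simp only [Finset.mem_coe, nbrs, Finset.mem_filter] at hx
    simp only [Finset.mem_coe, Fin', Finset.mem_filter]
    refine ⟨hx.2.1, fun y hy => ?_⟩
    rw [Sym2.mem_iff] at hy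
    rcases hy with rfl | rfl
    · exact hu
    · exact hx.1
  · intro x hx y hy hxy
    rw [Sym2.eq_iff] at hxy
    simp only [Finset.mem_coe, nbrs, Finset.mem_filter] at hx hy
    rcases hxy with ⟨_, h⟩ | ⟨h1, h2⟩
    · exact h
    · exact absurd h1.symm hy.2.2

lemma pick_nonnbr (F : Finset (Sym2 V)) (s : Finset V) (u : V) (hu : u ∈ s)
    (h : (Fin' F s).card + 2 ≤ s.card) :
    ∃ v ∈ s, v ≠ u ∧ s(u,v) ∉ F := by
  obtain ⟨v, hv, hvn⟩ := pick_avoid s (insert u (nbrs F s u)) (by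
    calc (insert u (nbrs F s u)).card ≤ (nbrs F s u).card + 1 := Finset.card_insert_le _ _
    _ ≤ (Fin' F s).card + 1 := by have := nbrs_card_le F s u hu; omega
    _ < s.card := by omega)
  simp only [Finset.mem_insert, nbrs, Finset.mem_filter] at hvn
  push_neg at hvn
  refine ⟨v, hv, hvn.1, fun hc => hvn.1 ((hvn.2 hv hc) )⟩

/-- cover lemma -/
lemma cover_bound (F : Finset (Sym2 V)) (s s' : Finset V) (hss : s' ⊆ s) (C : Finset (Sym2 V))
    (hC : C ⊆ Fin' F s) (hmeet : ∀ e ∈ C, ∃ x ∈ e, x ∉ s') :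
    (Fin' F s').card + C.card ≤ (Fin' F s).card := by
  have hsub : Fin' F s' ⊆ (Fin' F s) \ C := by
    intro e he
    simp only [Fin', Finset.mem_filter] at he ⊢
    rw [Finset.mem_sdiff, Finset.mem_filter]
    refine ⟨⟨he.1, fun x hx => hss (he.2 x hx)⟩, fun hc => ?_⟩
    obtain ⟨x, hx, hxs⟩ := hmeet e hc
    exact hxs (he.2 x hx)
  have h1 := Finset.card_le_card hsub
  rw [Finset.card_sdiff_of_subset hC] at h1
  have h2 := Finset.card_le_card hC
  omega


lemma mem_Fin' {F : Finset (Sym2 V)} {s : Finset V} {e : Sym2 V} :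
    e ∈ Fin' F s ↔ e ∈ F ∧ ∀ x ∈ e, x ∈ s := Finset.mem_filter

def deg (F : Finset (Sym2 V)) (x : V) : ℕ := (F.filter (fun e => x ∈ e)).card

def nbrsU (F : Finset (Sym2 V)) (u : V) : Finset V :=
  univ.filter (fun x => x ≠ u ∧ s(u,x) ∈ F)

lemma step (F : Finset (Sym2 V)) (s : Finset V) (h4 : 4 ≤ s.card)
    (hF : (Fin' F s).card + 2 ≤ s.card) :
    ∃ u ∈ s, ∃ v ∈ s, u ≠ v ∧ s(u,v) ∉ F ∧
      (Fin' F ((s.erase u).erase v)).card + 2 ≤ s.card - 2 := by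
  set Φ := Fin' F s with hΦ
  have hsub : ∀ u v : V, (s.erase u).erase v ⊆ s := fun u v =>
    (Finset.erase_subset _ _).trans (Finset.erase_subset _ _)
  have hnotin : ∀ u v : V, u ∉ (s.erase u).erase v ∧ v ∉ (s.erase u).erase v := by
    intro u v
    constructor
    · intro hc; exact absurd (Finset.mem_of_mem_erase hc) (Finset.notMem_erase _ _)
    · exact Finset.notMem_erase _ _
  by_cases hbig : ∃ u ∈ s, 2 ≤ (Φ.filter (fun e => u ∈ e)).card
  · obtain ⟨u, hu, hdeg⟩ := hbig
    obtain ⟨v, hv, hvu, hvF⟩ := pick_nonnbr F s u hu hF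
    refine ⟨u, hu, v, hv, hvu.symm, hvF, ?_⟩
    have hcov := cover_bound F s ((s.erase u).erase v) (hsub u v)
      (Φ.filter (fun e => u ∈ e)) (Finset.filter_subset _ _)
      (fun e he => ⟨u, (Finset.mem_filter.mp he).2, (hnotin u v).1⟩)
    rw [← hΦ] at hcov
    omega
  · push_neg at hbig
    by_cases hsmall : Φ.card ≤ 1
    · rcases Finset.eq_empty_or_nonempty Φ with hemp | ⟨e, he⟩
      · obtain ⟨u, hu⟩ := Finset.card_pos.mp (by omega : 0 < s.card)
        obtain ⟨v, hv, hvu, hvF⟩ := pick_nonnbr F s u hu hF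
        refine ⟨u, hu, v, hv, hvu.symm, hvF, ?_⟩
        have hcov := cover_bound F s ((s.erase u).erase v) (hsub u v) ∅
          (Finset.empty_subset _) (fun e he => absurd he (Finset.notMem_empty _))
        simp only [Finset.card_empty, add_zero] at hcov
        rw [← hΦ, hemp] at hcov
        simp only [Finset.card_empty, Nat.le_zero] at hcov
        omega
      · have hu : e.out.1 ∈ s := (mem_Fin'.mp he).2 _ (Sym2.out_fst_mem e)
        obtain ⟨v, hv, hvu, hvF⟩ := pick_nonnbr F s e.out.1 hu hF
        refine ⟨e.out.1, hu, v, hv, hvu.symm, hvF, ?_⟩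
        have hcov := cover_bound F s ((s.erase e.out.1).erase v) (hsub _ v) Φ
          (le_refl _) (fun f hf => by
            have : f = e := Finset.card_le_one.mp hsmall f hf e he
            exact ⟨e.out.1, this ▸ Sym2.out_fst_mem e, (hnotin _ v).1⟩)
        rw [← hΦ] at hcov
        omega
    · obtain ⟨e₁, he₁, e₂, he₂, hne⟩ := Finset.one_lt_card.mp (by omega : 1 < Φ.card)
      set u := e₁.out.1 with hu'
      set v := e₂.out.1 with hv'
      have hue : u ∈ e₁ := Sym2.out_fst_mem e₁
      have hve : v ∈ e₂ := Sym2.out_fst_mem e₂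
      have hu : u ∈ s := (mem_Fin'.mp he₁).2 _ hue
      have hv : v ∈ s := (mem_Fin'.mp he₂).2 _ hve
      have huv : u ≠ v := by
        intro huveq
        have : ({e₁, e₂} : Finset (Sym2 V)) ⊆ Φ.filter (fun e => u ∈ e) := by
          intro f hf
          rcases Finset.mem_insert.mp hf with rfl | hf
          · exact Finset.mem_filter.mpr ⟨he₁, hue⟩
          · rw [Finset.mem_singleton.mp hf]
            exact Finset.mem_filter.mpr ⟨he₂, by rw [huveq]; exact hve⟩
        have hc2 : ({e₁, e₂} : Finset (Sym2 V)).card = 2 := Finset.card_pair hne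
        have := Finset.card_le_card this
        have := hbig u hu
        omega
      have hF' : s(u,v) ∉ F := by
        intro hc
        have hmem : s(u,v) ∈ Φ := mem_Fin'.mpr ⟨hc, by
          intro x hx
          rcases Sym2.mem_iff.mp hx with rfl | rfl
          · exact hu
          · exact hv⟩
        have h1 : s(u,v) = e₁ := by
          by_contra hne1
          have : ({s(u,v), e₁} : Finset (Sym2 V)) ⊆ Φ.filter (fun e => u ∈ e) := by
            intro f hf
            rcases Finset.mem_insert.mp hf with rfl | hf
            · exact Finset.mem_filter.mpr ⟨hmem, by simp⟩
            · exact Finset.mem_filter.mpr ⟨by rwa [Finset.mem_singleton.mp hf], by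
                rw [Finset.mem_singleton.mp hf]; exact hue⟩
          have := Finset.card_le_card this
          rw [Finset.card_pair hne1] at this
          have := hbig u hu
          omega
        have h2 : s(u,v) = e₂ := by
          by_contra hne2
          have : ({s(u,v), e₂} : Finset (Sym2 V)) ⊆ Φ.filter (fun e => v ∈ e) := by
            intro f hf
            rcases Finset.mem_insert.mp hf with rfl | hf
            · exact Finset.mem_filter.mpr ⟨hmem, by simp⟩
            · exact Finset.mem_filter.mpr ⟨by rwa [Finset.mem_singleton.mp hf], by
                rw [Finset.mem_singleton.mp hf]; exact hve⟩
          have := Finset.card_le_card this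
          rw [Finset.card_pair hne2] at this
          have := hbig v hv
          omega
        exact hne (h1 ▸ h2)
      refine ⟨u, hu, v, hv, huv, hF', ?_⟩
      have hcov := cover_bound F s ((s.erase u).erase v) (hsub u v) {e₁, e₂}
        (by
          intro f hf
          rcases Finset.mem_insert.mp hf with rfl | hf
          · exact he₁
          · exact (Finset.mem_singleton.mp hf) ▸ he₂)
        (by
          intro f hf
          rcases Finset.mem_insert.mp hf with rfl | hf
          · exact ⟨u, hue, (hnotin u v).1⟩
          · exact ⟨v, (Finset.mem_singleton.mp hf) ▸ hve, (hnotin u v).2⟩)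
      rw [Finset.card_pair hne, ← hΦ] at hcov
      omega


lemma even_lemma (k : ℕ) : ∀ m : ℕ, ∀ (s : Finset V) (F : Finset (Sym2 V)),
    s.card = m → Even m →
    ((Fin' F s).card + 2 ≤ m ∨ m = 0) →
    ∃ h : Sym2 V → ℕ, (∀ e, h e ≤ k) ∧
      (∀ e, h e ≠ 0 → e ∉ F ∧ ¬ e.IsDiag ∧ ∀ x ∈ e, x ∈ s) ∧
      (∀ v ∈ s, vsum h v = k) := by
  intro m
  induction m using Nat.strong_induction_on with
  | _ m ih =>
    intro s F hcard heven hF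
    rcases Nat.eq_zero_or_pos m with rfl | hpos
    · refine ⟨fun _ => 0, by simp, by simp, fun v hv => ?_⟩
      rw [Finset.card_eq_zero.mp hcard] at hv
      exact absurd hv (Finset.notMem_empty v)
    · have hm2 : 2 ≤ m := by
        rcases heven with ⟨t, ht⟩; omega
      have hFl : (Fin' F s).card + 2 ≤ m := hF.resolve_right (by omega)
      have key : ∃ u ∈ s, ∃ v ∈ s, u ≠ v ∧ s(u,v) ∉ F ∧
          ((Fin' F ((s.erase u).erase v)).card + 2 ≤ m - 2 ∨ m - 2 = 0) := by
        rcases eq_or_lt_of_le hm2 with heq | hlt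
        · obtain ⟨u, v, hne, hsuv⟩ := Finset.card_eq_two.mp (by omega : s.card = 2)
          have hu : u ∈ s := by rw [hsuv]; simp
          have hv : v ∈ s := by rw [hsuv]; simp
          refine ⟨u, hu, v, hv, hne, ?_, Or.inr (by omega)⟩
          intro hc
          have hmem : s(u,v) ∈ Fin' F s := mem_Fin'.mpr ⟨hc, by
            intro x hx
            rcases Sym2.mem_iff.mp hx with rfl | rfl
            · exact hu
            · exact hv⟩
          have := Finset.card_pos.mpr ⟨_, hmem⟩
          omega
        · have h4 : 4 ≤ s.card := by rcases heven with ⟨t, ht⟩; omega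
          obtain ⟨u, hu, v, hv, hne, hnF, hrec⟩ := step F s h4 (by omega)
          exact ⟨u, hu, v, hv, hne, hnF, Or.inl (by rw [← hcard]; exact hrec)⟩
      obtain ⟨u, hu, v, hv, hne, hnF, hrec⟩ := key
      have hvmem : v ∈ s.erase u := Finset.mem_erase.mpr ⟨Ne.symm hne, hv⟩
      have hcard' : ((s.erase u).erase v).card = m - 2 := by
        rw [Finset.card_erase_of_mem hvmem, Finset.card_erase_of_mem hu, hcard]
        omega
      have hnotin : u ∉ (s.erase u).erase v ∧ v ∉ (s.erase u).erase v := by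
        constructor
        · intro hc; exact absurd (Finset.mem_of_mem_erase hc) (Finset.notMem_erase _ _)
        · exact Finset.notMem_erase _ _
      obtain ⟨h', hle', hsupp', hsum'⟩ := ih (m-2) (by omega) ((s.erase u).erase v) F hcard'
        (by rcases heven with ⟨t, ht⟩; exact ⟨t-1, by omega⟩) hrec
      have hdisj : ∀ e, e = s(u,v) → h' e = 0 := by
        intro e he
        by_contra hc
        have := (hsupp' e hc).2.2 u (by rw [he]; simp)
        exact hnotin.1 this
      refine ⟨fun e => single s(u,v) k e + h' e, ?_, ?_, ?_⟩
      · intro e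
        by_cases he : e = s(u,v)
        · subst he; simp [single, hdisj _ rfl]
        · simp [single, he]; exact hle' e
      · intro e he
        by_cases heq : e = s(u,v)
        · subst heq
          refine ⟨hnF, by simp [Sym2.mk_isDiag_iff]; exact hne, ?_⟩
          intro x hx
          rcases Sym2.mem_iff.mp hx with rfl | rfl
          · exact hu
          · exact hv
        · have : h' e ≠ 0 := by
            simp only [single, heq, if_false, zero_add] at he
            exact he
          obtain ⟨h1, h2, h3⟩ := hsupp' e this
          exact ⟨h1, h2, fun x hx =>
            Finset.mem_of_mem_erase (Finset.mem_of_mem_erase (h3 x hx))⟩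
      · intro w hw
        rw [vsum_add, vsum_single]
        by_cases hwuv : w ∈ s(u,v)
        · rw [if_pos hwuv]
          have : vsum h' w = 0 := by
            apply vsum_eq_zero_of
            intro e he hc
            have := (hsupp' e he).2.2 w hc
            rcases Sym2.mem_iff.mp hwuv with rfl | rfl
            · exact hnotin.1 this
            · exact hnotin.2 this
          omega
        · rw [if_neg hwuv]
          have hws : w ∈ (s.erase u).erase v := by
            rw [Sym2.mem_iff] at hwuv
            push_neg at hwuv
            exact Finset.mem_erase.mpr ⟨hwuv.2, Finset.mem_erase.mpr ⟨hwuv.1, hw⟩⟩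
          rw [hsum' w hws]; omega

lemma Fin'_univ (F : Finset (Sym2 V)) : Fin' F (univ : Finset V) = F :=
  Finset.filter_true_of_mem (fun _ _ => fun x _ => Finset.mem_univ x)

omit [Fintype V] in
lemma exists_other {e : Sym2 V} {u : V} (hu : u ∈ e) (hd : ¬ e.IsDiag) :
    ∃ x, x ≠ u ∧ e = s(u,x) := by
  induction e using Sym2.ind with
  | _ a b =>
    rw [Sym2.mk_isDiag_iff] at hd
    rcases Sym2.mem_iff.mp hu with rfl | rfl
    · exact ⟨b, fun h => hd h.symm, rfl⟩
    · exact ⟨a, hd, Sym2.eq_swap⟩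

lemma card_nbrsU (F : Finset (Sym2 V)) (hnd : ∀ e ∈ F, ¬ e.IsDiag) (u : V) :
    (nbrsU F u).card = deg F u := by
  apply Finset.card_nbij (fun x => s(u,x))
  · intro x hx
    simp only [Finset.mem_coe, nbrsU, Finset.mem_filter] at hx
    exact Finset.mem_filter.mpr ⟨hx.2.2, by simp⟩
  · intro x hx y hy hxy
    simp only [Finset.mem_coe, nbrsU, Finset.mem_filter] at hx hy
    rcases Sym2.eq_iff.mp hxy with ⟨_, h⟩ | ⟨h1, h2⟩
    · exact h
    · exact absurd h1.symm hy.2.1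
  · intro e he
    simp only [Finset.coe_filter, Set.mem_setOf_eq] at he
    obtain ⟨x, hxu, rfl⟩ := exists_other he.2 (hnd e he.1)
    exact ⟨x, by simp [nbrsU, hxu, he.1], rfl⟩

lemma pair_free (F : Finset (Sym2 V)) (T : Finset V) (hT : 3 ≤ T.card)
    (hF : (Fin' F T).card + 1 ≤ T.card) :
    ∃ v ∈ T, ∃ w ∈ T, v ≠ w ∧ s(v,w) ∉ F := by
  obtain ⟨a, ha⟩ := Finset.card_pos.mp (by omega : 0 < T.card)
  by_cases hA : ∃ x ∈ T, x ≠ a ∧ s(a,x) ∉ F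
  · obtain ⟨x, hx, hxa, hxF⟩ := hA
    exact ⟨a, ha, x, hx, Ne.symm hxa, hxF⟩
  · push_neg at hA
    have himg : (T.erase a).image (fun x => s(a,x)) ⊆ Fin' F T := by
      intro e he
      obtain ⟨x, hx, rfl⟩ := Finset.mem_image.mp he
      have hxa := Finset.mem_erase.mp hx
      refine mem_Fin'.mpr ⟨hA x hxa.2 hxa.1, ?_⟩
      intro y hy
      rcases Sym2.mem_iff.mp hy with rfl | rfl
      · exact ha
      · exact hxa.2
    have hinj : Set.InjOn (fun x => s(a,x)) (T.erase a) := by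
      intro x hx y hy hxy
      simp only [Finset.mem_coe, Finset.mem_erase] at hx hy
      rcases Sym2.eq_iff.mp hxy with ⟨_, h⟩ | ⟨h1, h2⟩
      · exact h
      · exact absurd h1.symm hy.1
    have hcardimg : ((T.erase a).image (fun x => s(a,x))).card = T.card - 1 := by
      rw [Finset.card_image_of_injOn hinj, Finset.card_erase_of_mem ha]
    have heq : (T.erase a).image (fun x => s(a,x)) = Fin' F T := by
      apply Finset.eq_of_subset_of_card_le himg
      omega
    obtain ⟨b, hb, c, hc, hbc⟩ := Finset.one_lt_card.mp
      (by rw [Finset.card_erase_of_mem ha]; omega : 1 < (T.erase a).card)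
    refine ⟨b, (Finset.mem_erase.mp hb).2, c, (Finset.mem_erase.mp hc).2, hbc, ?_⟩
    intro hcF
    have hmem : s(b,c) ∈ Fin' F T := mem_Fin'.mpr ⟨hcF, by
      intro y hy
      rcases Sym2.mem_iff.mp hy with rfl | rfl
      · exact (Finset.mem_erase.mp hb).2
      · exact (Finset.mem_erase.mp hc).2⟩
    rw [← heq] at hmem
    obtain ⟨x, hx, hxe⟩ := Finset.mem_image.mp hmem
    have : a ∈ s(b,c) := by rw [← hxe]; simp
    rcases Sym2.mem_iff.mp this with rfl | rfl
    · exact (Finset.mem_erase.mp hb).1 rfl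
    · exact (Finset.mem_erase.mp hc).1 rfl

lemma matching_bound (F : Finset (Sym2 V)) (hnd : ∀ e ∈ F, ¬ e.IsDiag)
    (hdeg : ∀ x : V, deg F x ≤ 1) : 2 * F.card ≤ Fintype.card V := by
  have hdisj : ∀ e₁ ∈ F, ∀ e₂ ∈ F, e₁ ≠ e₂ →
      Disjoint (univ.filter (fun x : V => x ∈ e₁)) (univ.filter (fun x => x ∈ e₂)) := by
    intro e₁ he₁ e₂ he₂ hne
    rw [Finset.disjoint_left]
    intro x hx1 hx2
    have hsub : ({e₁, e₂} : Finset (Sym2 V)) ⊆ F.filter (fun e => x ∈ e) := by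
      intro f hf
      rcases Finset.mem_insert.mp hf with rfl | hf
      · exact Finset.mem_filter.mpr ⟨he₁, (Finset.mem_filter.mp hx1).2⟩
      · rw [Finset.mem_singleton.mp hf]
        exact Finset.mem_filter.mpr ⟨he₂, (Finset.mem_filter.mp hx2).2⟩
    have := Finset.card_le_card hsub
    rw [Finset.card_pair hne] at this
    have := hdeg x
    simp only [deg] at this
    omega
  have hcard2 : ∀ e ∈ F, (univ.filter (fun x : V => x ∈ e)).card = 2 := by
    intro e he
    induction e using Sym2.ind with
    | _ a b =>
      have hab : a ≠ b := by
        intro h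
        exact hnd _ he (Sym2.mk_isDiag_iff.mpr h)
      have : univ.filter (fun x : V => x ∈ s(a,b)) = {a, b} := by
        ext x
        simp [Sym2.mem_iff]
      rw [this, Finset.card_pair hab]
  calc 2 * F.card = ∑ e ∈ F, (univ.filter (fun x : V => x ∈ e)).card := by
        rw [Finset.sum_congr rfl hcard2]
        simp [mul_comm]
    _ = (F.biUnion (fun e => univ.filter (fun x : V => x ∈ e))).card :=
        (Finset.card_biUnion hdisj).symm
    _ ≤ Fintype.card V := by
        rw [← Finset.card_univ]
        exact Finset.card_le_card (Finset.subset_univ _)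


lemma assemble (k : ℕ) (F : Finset (Sym2 V)) (R : Finset V) (g : Sym2 V → ℕ) (u : V)
    (hg_le : ∀ e, g e ≤ k)
    (hg_supp : ∀ e, g e ≠ 0 → e ∉ F ∧ ¬e.IsDiag ∧ ∀ x ∈ e, x ∈ R)
    (hu : u ∈ R)
    (hgu : vsum g u = k - 1)
    (hg_other : ∀ v ∈ R, v ≠ u → vsum g v = k)
    (heven : Even ((Rᶜ : Finset V).card))
    (hF' : (Fin' F (Rᶜ : Finset V)).card + 2 ≤ (Rᶜ : Finset V).card ∨ (Rᶜ : Finset V).card = 0) :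
    ∃ h : Sym2 V → ℕ, (∀ e, h e ≤ k) ∧ (∀ e, h e ≠ 0 → e ∉ F ∧ ¬e.IsDiag) ∧
      vsum h u = k - 1 ∧ ∀ v, v ≠ u → vsum h v = k := by
  obtain ⟨h', hle', hsupp', hsum'⟩ := even_lemma k ((Rᶜ : Finset V).card) Rᶜ F rfl heven hF'
  have hdisj : ∀ e, g e ≠ 0 → h' e = 0 := by
    intro e hge
    by_contra hne
    have h1 := (hg_supp e hge).2.2 e.out.1 (Sym2.out_fst_mem e)
    have h2 := (hsupp' e hne).2.2 e.out.1 (Sym2.out_fst_mem e)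
    exact (Finset.mem_compl.mp h2) h1
  have hg_zero : ∀ v ∈ R, vsum h' v = 0 := by
    intro v hv
    apply vsum_eq_zero_of
    intro e he hc
    exact Finset.mem_compl.mp ((hsupp' e he).2.2 v hc) hv
  have hh_zero : ∀ v, v ∉ R → vsum g v = 0 := by
    intro v hv
    apply vsum_eq_zero_of
    intro e he hc
    exact hv ((hg_supp e he).2.2 v hc)
  refine ⟨fun e => g e + h' e, ?_, ?_, ?_, ?_⟩
  · intro e
    show g e + h' e ≤ k
    by_cases hge : g e = 0
    · rw [hge]; simpa using hle' e
    · rw [hdisj e hge]; simpa using hg_le e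
  · intro e he
    have he' : g e + h' e ≠ 0 := he
    by_cases hge : g e = 0
    · rw [hge, zero_add] at he'
      exact ⟨(hsupp' e he').1, (hsupp' e he').2.1⟩
    · exact ⟨(hg_supp e hge).1, (hg_supp e hge).2.1⟩
  · rw [vsum_add, hgu, hg_zero u hu]; omega
  · intro v hv
    rw [vsum_add]
    by_cases hvR : v ∈ R
    · rw [hg_other v hvR hv, hg_zero v hvR]; omega
    · rw [hh_zero v hvR, hsum' v (Finset.mem_compl.mpr hvR)]; omega

lemma triangle_gadget (k t : ℕ) (hk : k = 2*t+1) (ht : 1 ≤ t) (F : Finset (Sym2 V))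
    (u a b : V) (hua : u ≠ a) (hub : u ≠ b) (hab : a ≠ b)
    (h1 : s(u,a) ∉ F) (h2 : s(u,b) ∉ F) (h3 : s(a,b) ∉ F) :
    ∃ g : Sym2 V → ℕ, (∀ e, g e ≤ k) ∧
      (∀ e, g e ≠ 0 → e ∉ F ∧ ¬e.IsDiag ∧ ∀ x ∈ e, x ∈ ({u,a,b} : Finset V)) ∧
      vsum g u = k - 1 ∧ (∀ v ∈ ({u,a,b} : Finset V), v ≠ u → vsum g v = k) := by
  set l : List (Sym2 V × ℕ) := [(s(u,a),t),(s(u,b),t),(s(a,b),t+1)] with hl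
  have hnd : (l.map Prod.fst).Nodup := by
    simp [hl, Sym2.eq_iff]
    tauto
  refine ⟨chainFn l, chainFn_le l k (by simp [hl]; omega), ?_, ?_, ?_⟩
  · intro e he
    have := chainFn_support l e he
    simp only [hl, List.map_cons, List.map_nil, List.mem_cons, List.not_mem_nil, or_false] at this
    rcases this with rfl | rfl | rfl
    · exact ⟨h1, by simp [Sym2.mk_isDiag_iff]; exact hua, by
        intro x hx; rcases Sym2.mem_iff.mp hx with rfl | rfl <;> simp⟩
    · exact ⟨h2, by simp [Sym2.mk_isDiag_iff]; exact hub, by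
        intro x hx; rcases Sym2.mem_iff.mp hx with rfl | rfl <;> simp⟩
    · exact ⟨h3, by simp [Sym2.mk_isDiag_iff]; exact hab, by
        intro x hx; rcases Sym2.mem_iff.mp hx with rfl | rfl <;> simp⟩
  · rw [vsum_chainFn l hnd u]
    have m1 : u ∈ s(u,a) := by simp
    have m2 : u ∈ s(u,b) := by simp
    have m3 : u ∉ s(a,b) := by simp [Sym2.mem_iff]; exact ⟨hua, hub⟩
    simp [hl, List.filter, m1, m2, m3]
    omega
  · intro v hv hvu
    rcases Finset.mem_insert.mp hv with rfl | hv
    · exact absurd rfl hvu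
    rcases Finset.mem_insert.mp hv with rfl | hv
    · rw [vsum_chainFn l hnd v]
      have m1 : v ∈ s(u,v) := by simp
      have m2 : v ∉ s(u,b) := by simp [Sym2.mem_iff]; exact ⟨fun h => hvu h, hab⟩
      have m3 : v ∈ s(v,b) := by simp
      simp [hl, List.filter, m1, m2, m3]
      omega
    · rw [Finset.mem_singleton.mp hv]
      rw [vsum_chainFn l hnd b]
      have m1 : b ∉ s(u,a) := by simp [Sym2.mem_iff]; exact ⟨Ne.symm hub, Ne.symm hab⟩
      have m2 : b ∈ s(u,b) := by simp
      have m3 : b ∈ s(a,b) := by simp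
      simp [hl, List.filter, m1, m2, m3]
      omega

lemma cycle5_gadget (k t : ℕ) (hk : k = 2*t+1) (ht : 1 ≤ t) (F : Finset (Sym2 V))
    (u a b z w : V)
    (d1 : u ≠ a) (d2 : u ≠ b) (d3 : u ≠ z) (d4 : u ≠ w) (d5 : a ≠ b) (d6 : a ≠ z)
    (d7 : a ≠ w) (d8 : b ≠ z) (d9 : b ≠ w) (d10 : z ≠ w)
    (h1 : s(u,a) ∉ F) (h2 : s(u,b) ∉ F) (h3 : s(a,z) ∉ F) (h4 : s(b,w) ∉ F)
    (h5 : s(z,w) ∉ F) :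
    ∃ g : Sym2 V → ℕ, (∀ e, g e ≤ k) ∧
      (∀ e, g e ≠ 0 → e ∉ F ∧ ¬e.IsDiag ∧ ∀ x ∈ e, x ∈ ({u,a,b,z,w} : Finset V)) ∧
      vsum g u = k - 1 ∧ (∀ v ∈ ({u,a,b,z,w} : Finset V), v ≠ u → vsum g v = k) := by
  set l : List (Sym2 V × ℕ) := [(s(u,a),t),(s(u,b),t),(s(a,z),t+1),(s(b,w),t+1),(s(z,w),t)] with hl
  have hnd : (l.map Prod.fst).Nodup := by
    simp [hl, Sym2.eq_iff]
    tauto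
  refine ⟨chainFn l, chainFn_le l k (by simp [hl]; omega), ?_, ?_, ?_⟩
  · intro e he
    have := chainFn_support l e he
    simp only [hl, List.map_cons, List.map_nil, List.mem_cons, List.not_mem_nil, or_false] at this
    rcases this with rfl | rfl | rfl | rfl | rfl <;>
      refine ⟨by assumption, by simp [Sym2.mk_isDiag_iff]; assumption, ?_⟩ <;>
      · intro x hx; rcases Sym2.mem_iff.mp hx with rfl | rfl <;> simp
  · rw [vsum_chainFn l hnd u]
    simp [hl, List.filter, Sym2.mem_iff, d1, d2, d3, d4, d5, d6, d7, d8, d9, d10,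
      Ne.symm d1, Ne.symm d2, Ne.symm d3, Ne.symm d4, Ne.symm d5, Ne.symm d6,
      Ne.symm d7, Ne.symm d8, Ne.symm d9, Ne.symm d10]
    omega
  · intro v hv hvu
    simp only [Finset.mem_insert, Finset.mem_singleton] at hv
    rcases hv with rfl | rfl | rfl | rfl | rfl
    · exact absurd rfl hvu
    all_goals rw [vsum_chainFn l hnd _]
    all_goals simp [hl, List.filter, Sym2.mem_iff, d1, d2, d3, d4, d5, d6, d7, d8, d9, d10,
      Ne.symm d1, Ne.symm d2, Ne.symm d3, Ne.symm d4, Ne.symm d5, Ne.symm d6,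
      Ne.symm d7, Ne.symm d8, Ne.symm d9, Ne.symm d10]
    all_goals omega

lemma star_gadget (k t : ℕ) (hk : k = 2*t+1) (ht : 1 ≤ t) (F : Finset (Sym2 V))
    (u a b z w : V)
    (d1 : u ≠ a) (d2 : u ≠ b) (d3 : u ≠ z) (d4 : u ≠ w) (d5 : a ≠ b) (d6 : a ≠ z)
    (d7 : a ≠ w) (d8 : b ≠ z) (d9 : b ≠ w) (d10 : z ≠ w)
    (h1 : s(u,a) ∉ F) (h2 : s(a,b) ∉ F) (h3 : s(b,z) ∉ F) (h4 : s(b,w) ∉ F)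
    (h5 : s(z,w) ∉ F) :
    ∃ g : Sym2 V → ℕ, (∀ e, g e ≤ k) ∧
      (∀ e, g e ≠ 0 → e ∉ F ∧ ¬e.IsDiag ∧ ∀ x ∈ e, x ∈ ({u,a,b,z,w} : Finset V)) ∧
      vsum g u = k - 1 ∧ (∀ v ∈ ({u,a,b,z,w} : Finset V), v ≠ u → vsum g v = k) := by
  set l : List (Sym2 V × ℕ) := [(s(u,a),k-1),(s(a,b),1),(s(b,z),t),(s(b,w),t),(s(z,w),t+1)] with hl
  have hnd : (l.map Prod.fst).Nodup := by
    simp [hl, Sym2.eq_iff]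
    tauto
  refine ⟨chainFn l, chainFn_le l k (by simp [hl]; omega), ?_, ?_, ?_⟩
  · intro e he
    have := chainFn_support l e he
    simp only [hl, List.map_cons, List.map_nil, List.mem_cons, List.not_mem_nil, or_false] at this
    rcases this with rfl | rfl | rfl | rfl | rfl <;>
      refine ⟨by assumption, by simp [Sym2.mk_isDiag_iff]; assumption, ?_⟩ <;>
      · intro x hx; rcases Sym2.mem_iff.mp hx with rfl | rfl <;> simp
  · rw [vsum_chainFn l hnd u]
    simp [hl, List.filter, Sym2.mem_iff, d1, d2, d3, d4, d5, d6, d7, d8, d9, d10,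
      Ne.symm d1, Ne.symm d2, Ne.symm d3, Ne.symm d4, Ne.symm d5, Ne.symm d6,
      Ne.symm d7, Ne.symm d8, Ne.symm d9, Ne.symm d10]
  · intro v hv hvu
    simp only [Finset.mem_insert, Finset.mem_singleton] at hv
    rcases hv with rfl | rfl | rfl | rfl | rfl
    · exact absurd rfl hvu
    all_goals rw [vsum_chainFn l hnd _]
    all_goals simp [hl, List.filter, Sym2.mem_iff, d1, d2, d3, d4, d5, d6, d7, d8, d9, d10,
      Ne.symm d1, Ne.symm d2, Ne.symm d3, Ne.symm d4, Ne.symm d5, Ne.symm d6,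
      Ne.symm d7, Ne.symm d8, Ne.symm d9, Ne.symm d10]
    all_goals omega

lemma mem_nbrsU {F : Finset (Sym2 V)} {u x : V} :
    x ∈ nbrsU F u ↔ x ≠ u ∧ s(u,x) ∈ F := by simp [nbrsU]

omit [Fintype V] in
lemma edge_in_pair {e : Sym2 V} (hnd : ¬ e.IsDiag) {a b : V}
    (h : ∀ x ∈ e, x ∈ ({a,b} : Finset V)) : e = s(a,b) := by
  induction e using Sym2.ind with
  | _ x y =>
    rw [Sym2.mk_isDiag_iff] at hnd
    have hx := h x (by simp)
    have hy := h y (by simp)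
    simp only [Finset.mem_insert, Finset.mem_singleton] at hx hy
    rw [Sym2.eq_iff]
    rcases hx with rfl | rfl <;> rcases hy with rfl | rfl <;> tauto

lemma card3 {u a b : V} (h1 : u ≠ a) (h2 : u ≠ b) (h3 : a ≠ b) :
    ({u,a,b} : Finset V).card = 3 := by
  rw [Finset.card_insert_of_notMem (by simp [h1, h2]), Finset.card_pair h3]

lemma card5 {u a b z w : V} (d1 : u ≠ a) (d2 : u ≠ b) (d3 : u ≠ z) (d4 : u ≠ w)
    (d5 : a ≠ b) (d6 : a ≠ z) (d7 : a ≠ w) (d8 : b ≠ z) (d9 : b ≠ w) (d10 : z ≠ w) :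
    ({u,a,b,z,w} : Finset V).card = 5 := by
  rw [Finset.card_insert_of_notMem (by simp [d1, d2, d3, d4]),
    Finset.card_insert_of_notMem (by simp [d5, d6, d7]),
    Finset.card_insert_of_notMem (by simp [d8, d9]), Finset.card_pair d10]

lemma deg_le (F : Finset (Sym2 V)) (x : V) : deg F x ≤ F.card := Finset.card_filter_le _ _

lemma deg_pos (F : Finset (Sym2 V)) (hF : F.Nonempty) : ∃ x, 1 ≤ deg F x := by
  obtain ⟨e, he⟩ := hF
  refine ⟨e.out.1, Finset.card_pos.mpr ⟨e, Finset.mem_filter.mpr ⟨he, Sym2.out_fst_mem e⟩⟩⟩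

lemma odd_main (k t : ℕ) (hk : k = 2*t+1) (ht : 1 ≤ t) (F : Finset (Sym2 V))
    (hn : 7 ≤ Fintype.card V) (hodd : Odd (Fintype.card V))
    (hFnd : ∀ e ∈ F, ¬ e.IsDiag) (hFc : F.card + 2 ≤ Fintype.card V) :
    ∃ h : Sym2 V → ℕ, (∀ e, h e ≤ k) ∧ (∀ e, h e ≠ 0 → e ∉ F ∧ ¬e.IsDiag) ∧
      ∃ u, vsum h u = k - 1 ∧ ∀ v, v ≠ u → vsum h v = k := by
  classical
  set n := Fintype.card V with hndef
  obtain ⟨m, hm⟩ := hodd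
  have hV : (univ : Finset V).Nonempty := Finset.card_pos.mp (by rw [Finset.card_univ]; omega)
  obtain ⟨u, -, hmax⟩ := Finset.exists_max_image (univ : Finset V) (deg F) hV
  set d := deg F u with hd
  have hdF : d ≤ F.card := deg_le F u
  have hnbr : (nbrsU F u).card = d := card_nbrsU F hFnd u
  have hcov : ∀ (R : Finset V) (C : Finset (Sym2 V)), C ⊆ F → (∀ e ∈ C, ∃ x ∈ e, x ∈ R) →
      (Fin' F (Rᶜ : Finset V)).card + C.card ≤ F.card := by
    intro R C hC hmeet
    have := cover_bound F univ Rᶜ (Finset.subset_univ _) C (by rw [Fin'_univ]; exact hC)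
      (fun e he => by
        obtain ⟨x, hx, hxR⟩ := hmeet e he
        exact ⟨x, hx, by simp [hxR]⟩)
    rwa [Fin'_univ] at this
  have hpick : ∀ T : Finset V, T.card < n → ∃ v, v ∉ T := by
    intro T hT
    obtain ⟨v, -, hv⟩ := pick_avoid univ T (by rw [Finset.card_univ]; exact hT)
    exact ⟨v, hv⟩
  have hAmem : ∀ x, x ∉ insert u (nbrsU F u) → x ≠ u ∧ s(u,x) ∉ F := by
    intro x hx
    simp only [Finset.mem_insert, mem_nbrsU] at hx
    push_neg at hx
    exact ⟨hx.1, hx.2 hx.1⟩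
  have huins : u ∉ nbrsU F u := by simp [mem_nbrsU]
  have hcardins : (insert u (nbrsU F u)).card = d + 1 := by
    rw [Finset.card_insert_of_notMem huins, hnbr]
  have hsplit : (F.filter (fun e => u ∈ e)).card + (F.filter (fun e => ¬ u ∈ e)).card = F.card :=
    Finset.card_filter_add_card_filter_not (fun e => u ∈ e)
  have hdeg_filter : (F.filter (fun e => u ∈ e)).card = d := rfl
  -- helper to conclude from a triangle
  have tri_done : ∀ v w : V, u ≠ v → u ≠ w → v ≠ w →
      s(u,v) ∉ F → s(u,w) ∉ F → s(v,w) ∉ F →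
      ((Fin' F (({u,v,w} : Finset V)ᶜ : Finset V)).card + 2 ≤ n - 3) →
      ∃ h : Sym2 V → ℕ, (∀ e, h e ≤ k) ∧ (∀ e, h e ≠ 0 → e ∉ F ∧ ¬e.IsDiag) ∧
        ∃ u', vsum h u' = k - 1 ∧ ∀ v', v' ≠ u' → vsum h v' = k := by
    intro v w huv huw hvw h1 h2 h3 hbound
    obtain ⟨g, hgle, hgsupp, hgu, hgoth⟩ := triangle_gadget k t hk ht F u v w huv huw hvw h1 h2 h3
    have hRc : (({u,v,w} : Finset V)ᶜ : Finset V).card = n - 3 := by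
      rw [Finset.card_compl, card3 huv huw hvw]
    obtain ⟨h, a1, a2, a3, a4⟩ := assemble k F {u,v,w} g u hgle hgsupp (by simp) hgu hgoth
      (by rw [hRc]; exact ⟨m - 1, by omega⟩)
      (Or.inl (by rw [hRc]; exact hbound))
    exact ⟨h, a1, a2, u, a3, a4⟩
  by_cases hA : d = n - 2
  · -- star case : all edges at u
    have hFall : F.filter (fun e => u ∈ e) = F := by
      apply Finset.eq_of_subset_of_card_le (Finset.filter_subset _ _)
      rw [hdeg_filter]
      omega
    have hstar : ∀ e ∈ F, u ∈ e := by
      intro e he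
      rw [← hFall] at he
      exact (Finset.mem_filter.mp he).2
    obtain ⟨x, hxT⟩ := hpick (insert u (nbrsU F u)) (by rw [hcardins]; omega)
    obtain ⟨hxu, hxF⟩ := hAmem x hxT
    obtain ⟨y, hy⟩ := hpick {u, x} (by
      have := Finset.card_insert_le u ({x} : Finset V); simp at this ⊢; omega)
    obtain ⟨z, hz⟩ := hpick {u, x, y} (by
      have h1 := Finset.card_insert_le u ({x, y} : Finset V)
      have h2 := Finset.card_insert_le x ({y} : Finset V)
      simp at h1 h2 ⊢; omega)
    obtain ⟨p, hp⟩ := hpick {u, x, y, z} (by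
      have h1 := Finset.card_insert_le u ({x, y, z} : Finset V)
      have h2 := Finset.card_insert_le x ({y, z} : Finset V)
      have h3 := Finset.card_insert_le y ({z} : Finset V)
      simp at h1 h2 h3 ⊢; omega)
    simp only [Finset.mem_insert, Finset.mem_singleton] at hy hz hp
    push_neg at hy hz hp
    have hnotu : ∀ a b : V, a ≠ u → b ≠ u → s(a,b) ∉ F := by
      intro a b ha hb hc
      have := hstar _ hc
      rw [Sym2.mem_iff] at this
      tauto
    obtain ⟨g, hgle, hgsupp, hgu, hgoth⟩ := star_gadget k t hk ht F u x y z p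
      hxu.symm (Ne.symm hy.1) (Ne.symm hz.1) (Ne.symm hp.1) (Ne.symm hy.2)
      (Ne.symm hz.2.1) (Ne.symm hp.2.1) (Ne.symm hz.2.2) (Ne.symm hp.2.2.1)
      (Ne.symm hp.2.2.2)
      hxF (hnotu _ _ hxu hy.1) (hnotu _ _ hy.1 hz.1) (hnotu _ _ hy.1 hp.1)
      (hnotu _ _ hz.1 hp.1)
    have hR5 : ({u,x,y,z,p} : Finset V).card = 5 :=
      card5 hxu.symm (Ne.symm hy.1) (Ne.symm hz.1) (Ne.symm hp.1) (Ne.symm hy.2)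
        (Ne.symm hz.2.1) (Ne.symm hp.2.1) (Ne.symm hz.2.2) (Ne.symm hp.2.2.1)
        (Ne.symm hp.2.2.2)
    have hRc : (({u,x,y,z,p} : Finset V)ᶜ : Finset V).card = n - 5 := by
      rw [Finset.card_compl, hR5]
    have hbnd := hcov ({u,x,y,z,p} : Finset V) F (le_refl _)
      (fun e he => ⟨u, hstar e he, by simp⟩)
    obtain ⟨h, a1, a2, a3, a4⟩ := assemble k F {u,x,y,z,p} g u hgle hgsupp (by simp) hgu hgoth
      (by rw [hRc]; exact ⟨m - 2, by omega⟩)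
      (Or.inl (by rw [hRc]; omega))
    exact ⟨h, a1, a2, u, a3, a4⟩
  by_cases hB : d = n - 3
  · -- two non neighbours a b
    have hcA : ((insert u (nbrsU F u))ᶜ : Finset V).card = 2 := by
      rw [Finset.card_compl, hcardins]; omega
    obtain ⟨a, b, hab, hAeq⟩ := Finset.card_eq_two.mp hcA
    have haA : a ∉ insert u (nbrsU F u) := by
      have : a ∈ ((insert u (nbrsU F u))ᶜ : Finset V) := by rw [hAeq]; simp
      exact Finset.mem_compl.mp this
    have hbA : b ∉ insert u (nbrsU F u) := by
      have : b ∈ ((insert u (nbrsU F u))ᶜ : Finset V) := by rw [hAeq]; simp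
      exact Finset.mem_compl.mp this
    obtain ⟨hau, haF⟩ := hAmem a haA
    obtain ⟨hbu, hbF⟩ := hAmem b hbA
    by_cases habF : s(a,b) ∈ F
    · -- 5-cycle case
      have hunot : u ∉ s(a,b) := by
        rw [Sym2.mem_iff]
        push_neg
        exact ⟨Ne.symm hau, Ne.symm hbu⟩
      have hsingle : F.filter (fun e => ¬ u ∈ e) = {s(a,b)} := by
        have hmem : s(a,b) ∈ F.filter (fun e => ¬ u ∈ e) :=
          Finset.mem_filter.mpr ⟨habF, hunot⟩
        have hle1 : (F.filter (fun e => ¬ u ∈ e)).card ≤ 1 := by omega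
        rw [Finset.eq_singleton_iff_unique_mem]
        exact ⟨hmem, fun e he => Finset.card_le_one.mp hle1 e he _ hmem⟩
      have honly : ∀ e ∈ F, u ∉ e → e = s(a,b) := by
        intro e he hue
        have : e ∈ F.filter (fun e => ¬ u ∈ e) := Finset.mem_filter.mpr ⟨he, hue⟩
        rw [hsingle] at this
        exact Finset.mem_singleton.mp this
      obtain ⟨z, hz⟩ := hpick {u, a, b} (by
        have h1 := Finset.card_insert_le u ({a, b} : Finset V)
        have h2 := Finset.card_insert_le a ({b} : Finset V)
        simp at h1 h2 ⊢; omega)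
      obtain ⟨w, hw⟩ := hpick {u, a, b, z} (by
        have h1 := Finset.card_insert_le u ({a, b, z} : Finset V)
        have h2 := Finset.card_insert_le a ({b, z} : Finset V)
        have h3 := Finset.card_insert_le b ({z} : Finset V)
        simp at h1 h2 h3 ⊢; omega)
      simp only [Finset.mem_insert, Finset.mem_singleton] at hz hw
      push_neg at hz hw
      have hedge : ∀ c e' : V, c ≠ u → e' ≠ u → (c ≠ a ∨ e' ≠ b) → (c ≠ b ∨ e' ≠ a) →
          s(c,e') ∉ F := by
        intro c e' hcu heu hca hcb hcF
        have hue : u ∉ s(c,e') := by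
          rw [Sym2.mem_iff]; push_neg; exact ⟨Ne.symm hcu, Ne.symm heu⟩
        have := honly _ hcF hue
        rw [Sym2.eq_iff] at this
        tauto
      obtain ⟨hzu, hza, hzb⟩ := hz
      obtain ⟨hwu, hwa, hwb, hwz⟩ := hw
      obtain ⟨g, hgle, hgsupp, hgu, hgoth⟩ := cycle5_gadget k t hk ht F u a b z w
        (Ne.symm hau) (Ne.symm hbu) (Ne.symm hzu) (Ne.symm hwu) hab
        (Ne.symm hza) (Ne.symm hwa) (Ne.symm hzb) (Ne.symm hwb) (Ne.symm hwz)
        haF hbF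
        (hedge a z hau hzu (Or.inr hzb) (Or.inl hab))
        (hedge b w hbu hwu (Or.inl (Ne.symm hab)) (Or.inr hwa))
        (hedge z w hzu hwu (Or.inl hza) (Or.inl hzb))
      have hR5 : ({u,a,b,z,w} : Finset V).card = 5 :=
        card5 (Ne.symm hau) (Ne.symm hbu) (Ne.symm hzu) (Ne.symm hwu) hab
          (Ne.symm hza) (Ne.symm hwa) (Ne.symm hzb) (Ne.symm hwb) (Ne.symm hwz)
      have hRc : (({u,a,b,z,w} : Finset V)ᶜ : Finset V).card = n - 5 := by
        rw [Finset.card_compl, hR5]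
      have hCcard : (insert s(a,b) (F.filter (fun e => u ∈ e))).card = d + 1 := by
        have hnot : s(a,b) ∉ F.filter (fun e => u ∈ e) :=
          fun hc => hunot (Finset.mem_filter.mp hc).2
        rw [Finset.card_insert_of_notMem hnot, hdeg_filter]
      have hbnd := hcov ({u,a,b,z,w} : Finset V) (insert s(a,b) (F.filter (fun e => u ∈ e)))
        (Finset.insert_subset_iff.mpr ⟨habF, Finset.filter_subset _ _⟩)
        (fun e he => by
          rcases Finset.mem_insert.mp he with rfl | he
          · exact ⟨a, by simp, by simp⟩
          · exact ⟨u, (Finset.mem_filter.mp he).2, by simp⟩)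
      rw [hCcard] at hbnd
      obtain ⟨h, a1, a2, a3, a4⟩ := assemble k F {u,a,b,z,w} g u hgle hgsupp (by simp) hgu hgoth
        (by rw [hRc]; exact ⟨m - 2, by omega⟩)
        (Or.inl (by rw [hRc]; omega))
      exact ⟨h, a1, a2, u, a3, a4⟩
    · -- triangle case
      apply tri_done a b (Ne.symm hau) (Ne.symm hbu) hab haF hbF habF
      have hbnd := hcov ({u,a,b} : Finset V) (F.filter (fun e => u ∈ e))
        (Finset.filter_subset _ _)
        (fun e he => ⟨u, (Finset.mem_filter.mp he).2, by simp⟩)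
      rw [hdeg_filter] at hbnd
      omega
  by_cases hC : 3 ≤ d
  · -- middle degree case
    have hdn4 : d ≤ n - 4 := by omega
    set T := ((insert u (nbrsU F u))ᶜ : Finset V) with hT
    have hTcard : T.card = n - 1 - d := by
      rw [hT, Finset.card_compl, hcardins]; omega
    have hTu : u ∉ T := by rw [hT]; simp
    have hFinT : Fin' F T ⊆ F.filter (fun e => ¬ u ∈ e) := by
      intro e he
      rw [mem_Fin'] at he
      refine Finset.mem_filter.mpr ⟨he.1, fun hue => hTu (he.2 u hue)⟩
    have hFinTcard : (Fin' F T).card ≤ F.card - d := by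
      have := Finset.card_le_card hFinT
      omega
    obtain ⟨v, hv, w, hw, hvw, hvwF⟩ := pair_free F T (by omega) (by omega)
    obtain ⟨hvu, hvF⟩ := hAmem v (Finset.mem_compl.mp hv)
    obtain ⟨hwu, hwF⟩ := hAmem w (Finset.mem_compl.mp hw)
    apply tri_done v w (Ne.symm hvu) (Ne.symm hwu) hvw hvF hwF hvwF
    have hbnd := hcov ({u,v,w} : Finset V) (F.filter (fun e => u ∈ e))
      (Finset.filter_subset _ _)
      (fun e he => ⟨u, (Finset.mem_filter.mp he).2, by simp⟩)
    rw [hdeg_filter] at hbnd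
    omega
  · -- low degree case
    push_neg at hC
    have hdall : ∀ x : V, deg F x ≤ d := fun x => hmax x (Finset.mem_univ x)
    have hd2 : ∀ x : V, (nbrsU F x).card ≤ 2 := by
      intro x
      rw [card_nbrsU F hFnd x]
      exact le_trans (hdall x) (by omega)
    have hd1 : n - 3 ≤ F.card → 2 ≤ d := by
      intro hcard
      by_contra hc
      push_neg at hc
      have := matching_bound F hFnd (fun x => le_trans (hdall x) (by omega))
      omega
    have hd0 : F.Nonempty → 1 ≤ d := by
      intro hne
      obtain ⟨x, hx⟩ := deg_pos F hne
      exact le_trans hx (hdall x)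
    by_cases hD4 : F.card = n - 2
    · -- need cover 3
      have hdeq2 : d = 2 := le_antisymm (by omega) (hd1 (by omega))
      have hnotucard : (F.filter (fun e => ¬ u ∈ e)).card = n - 4 := by omega
      -- nbrsU F u as a pair
      obtain ⟨na, nb, hnab, hnbrseq⟩ := Finset.card_eq_two.mp (by rw [hnbr]; exact hdeq2)
      have hsub1 : Fin' F (nbrsU F u) ⊆ {s(na,nb)} := by
        intro e he
        rw [mem_Fin'] at he
        rw [Finset.mem_singleton]
        exact edge_in_pair (hFnd e he.1) (by rw [← hnbrseq]; exact he.2)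
      have hnotsub : ¬ (F.filter (fun e => ¬ u ∈ e) ⊆ Fin' F (nbrsU F u)) := by
        intro hsub
        have h1 := Finset.card_le_card (hsub.trans hsub1)
        simp at h1
        omega
      rw [Finset.not_subset] at hnotsub
      obtain ⟨e₀, he₀, he₀n⟩ := hnotsub
      have he₀F : e₀ ∈ F := (Finset.mem_filter.mp he₀).1
      have he₀u : u ∉ e₀ := (Finset.mem_filter.mp he₀).2
      have : ∃ v ∈ e₀, v ∉ nbrsU F u := by
        by_contra hc
        push_neg at hc
        exact he₀n (mem_Fin'.mpr ⟨he₀F, hc⟩)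
      obtain ⟨v, hve₀, hvnb⟩ := this
      have hvu : v ≠ u := fun h => he₀u (h ▸ hve₀)
      have hvF : s(u,v) ∉ F := by
        intro hc
        exact hvnb (mem_nbrsU.mpr ⟨hvu, hc⟩)
      obtain ⟨w, hw⟩ := hpick (insert u (insert v (nbrsU F u ∪ nbrsU F v))) (by
        have h1 := Finset.card_insert_le u (insert v (nbrsU F u ∪ nbrsU F v))
        have h2 := Finset.card_insert_le v (nbrsU F u ∪ nbrsU F v)
        have h3 := Finset.card_union_le (nbrsU F u) (nbrsU F v)
        have h4 := hd2 u
        have h5 := hd2 v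
        omega)
      simp only [Finset.mem_insert, Finset.mem_union, mem_nbrsU] at hw
      push_neg at hw
      obtain ⟨hwu, hwv, hwuF', hwvF'⟩ := hw
      have hwuF : s(u,w) ∉ F := hwuF' hwu
      have hwvF : s(v,w) ∉ F := hwvF' hwv
      apply tri_done v w (Ne.symm hvu) (Ne.symm hwu) (Ne.symm hwv) hvF hwuF hwvF
      have hCcard : (insert e₀ (F.filter (fun e => u ∈ e))).card = d + 1 := by
        have hnot : e₀ ∉ F.filter (fun e => u ∈ e) :=
          fun hc => he₀u (Finset.mem_filter.mp hc).2
        rw [Finset.card_insert_of_notMem hnot, hdeg_filter]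
      have hbnd := hcov ({u,v,w} : Finset V) (insert e₀ (F.filter (fun e => u ∈ e)))
        (Finset.insert_subset_iff.mpr ⟨he₀F, Finset.filter_subset _ _⟩)
        (fun e he => by
          rcases Finset.mem_insert.mp he with rfl | he
          · exact ⟨v, hve₀, by simp⟩
          · exact ⟨u, (Finset.mem_filter.mp he).2, by simp⟩)
      rw [hCcard] at hbnd
      omega
    · -- F.card ≤ n - 3
      have hFle : F.card ≤ n - 3 := by omega
      obtain ⟨v, hv⟩ := hpick (insert u (nbrsU F u)) (by rw [hcardins]; omega)
      obtain ⟨hvu, hvF⟩ := hAmem v hv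
      obtain ⟨w, hw⟩ := hpick (insert u (insert v (nbrsU F u ∪ nbrsU F v))) (by
        have h1 := Finset.card_insert_le u (insert v (nbrsU F u ∪ nbrsU F v))
        have h2 := Finset.card_insert_le v (nbrsU F u ∪ nbrsU F v)
        have h3 := Finset.card_union_le (nbrsU F u) (nbrsU F v)
        have h4 := hd2 u
        have h5 := hd2 v
        omega)
      simp only [Finset.mem_insert, Finset.mem_union, mem_nbrsU] at hw
      push_neg at hw
      obtain ⟨hwu, hwv, hwuF', hwvF'⟩ := hw
      have hwuF : s(u,w) ∉ F := hwuF' hwu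
      have hwvF : s(v,w) ∉ F := hwvF' hwv
      apply tri_done v w (Ne.symm hvu) (Ne.symm hwu) (Ne.symm hwv) hvF hwuF hwvF
      have hbnd := hcov ({u,v,w} : Finset V) (F.filter (fun e => u ∈ e))
        (Finset.filter_subset _ _)
        (fun e he => ⟨u, (Finset.mem_filter.mp he).2, by simp⟩)
      rw [hdeg_filter] at hbnd
      have hd0' : n - 4 ≤ F.card → 1 ≤ d := fun hcc => hd0 (Finset.card_pos.mp (by omega))
      have hcases : F.card + 5 ≤ n ∨ F.card = n - 4 ∨ F.card = n - 3 := by omega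
      rcases hcases with hc1 | hc2 | hc3
      · omega
      · have := hd0' (by omega)
        omega
      · have := hd1 (by omega)
        omega


lemma vsum_zero_at (h : Sym2 V → ℕ) (v : V) (hz : ∀ e, v ∈ e → h e = 0) :
    vsum h v = 0 :=
  Finset.sum_eq_zero fun e he => hz e (Finset.mem_filter.mp he).2

lemma to_perfect (k : ℕ) (F : Finset (Sym2 V)) (h : Sym2 V → ℕ)
    (hle : ∀ e, h e ≤ k) (hsupp : ∀ e, h e ≠ 0 → e ∉ F ∧ ¬e.IsDiag)
    (hsum : ∀ v, vsum h v = k) :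
    HasPerfect ((⊤ : SimpleGraph V).deleteEdges ↑F) k := by
  refine ⟨h, ⟨hle, ?_, fun v => (hsum v).le⟩, hsum⟩
  intro e he
  by_contra hne
  obtain ⟨h1, h2⟩ := hsupp e hne
  apply he
  rw [SimpleGraph.edgeSet_deleteEdges]
  refine ⟨by rw [SimpleGraph.edgeSet_top]; exact h2, fun hc => h1 (Finset.mem_coe.mp hc)⟩

lemma to_almost (k : ℕ) (F : Finset (Sym2 V)) (h : Sym2 V → ℕ)
    (hle : ∀ e, h e ≤ k) (hsupp : ∀ e, h e ≠ 0 → e ∉ F ∧ ¬e.IsDiag)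
    (u : V) (hu : vsum h u = k - 1) (hall : ∀ v, v ≠ u → vsum h v = k) :
    HasAlmost ((⊤ : SimpleGraph V).deleteEdges ↑F) k := by
  refine ⟨h, ⟨hle, ?_, ?_⟩, u, hu, hall⟩
  · intro e he
    by_contra hne
    obtain ⟨h1, h2⟩ := hsupp e hne
    apply he
    rw [SimpleGraph.edgeSet_deleteEdges]
    refine ⟨by rw [SimpleGraph.edgeSet_top]; exact h2, fun hc => h1 (Finset.mem_coe.mp hc)⟩
  · intro v
    by_cases hv : v = u
    · rw [hv, hu]; omega
    · exact (hall v hv).le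

lemma no_pa (k : ℕ) (hk3 : 3 ≤ k) (G : SimpleGraph V) [DecidableRel G.Adj] (v : V)
    (hv : ∀ e ∈ G.edgeSet, v ∉ e) : ¬ HasPerfect G k ∧ ¬ HasAlmost G k := by
  have hz : ∀ h : Sym2 V → ℕ, IsIntKMatching G k h → vsum h v = 0 := by
    rintro h ⟨hle, hzero, -⟩
    apply vsum_zero_at
    intro e hve
    exact hzero e (fun he => hv e he hve)
  constructor
  · rintro ⟨h, hm, hall⟩
    have h1 := hall v
    rw [hz h hm] at h1
    omega
  · rintro ⟨h, hm, v', hv', hall⟩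
    by_cases hvv : v = v'
    · subst hvv
      rw [hz h hm] at hv'
      omega
    · have h1 := hall v hvv
      rw [hz h hm] at h1
      omega

end KMaux

open IntKM KMaux

theorem stmt10 (k : ℕ) (hk : Odd k) (hk3 : 3 ≤ k) (n : ℕ) (hn : 6 ≤ n) :
    mpk (⊤ : SimpleGraph (Fin n)) k = n - 1 ∧
    (∀ F : Finset (Sym2 (Fin n)), ↑F ⊆ (⊤ : SimpleGraph (Fin n)).edgeSet → F.card ≤ n - 2 →
      HasPerfect ((⊤ : SimpleGraph (Fin n)).deleteEdges ↑F) k ∨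
        HasAlmost ((⊤ : SimpleGraph (Fin n)).deleteEdges ↑F) k) ∧
    (∃ v : Fin n,
      ¬ HasPerfect ((⊤ : SimpleGraph (Fin n)).deleteEdges {e | v ∈ e}) k ∧
      ¬ HasAlmost ((⊤ : SimpleGraph (Fin n)).deleteEdges {e | v ∈ e}) k) := by
  classical
  obtain ⟨t, ht⟩ := hk
  have ht1 : 1 ≤ t := by omega
  have hcard : Fintype.card (Fin n) = n := Fintype.card_fin n
  -- Part 2
  have part2 : ∀ F : Finset (Sym2 (Fin n)), ↑F ⊆ (⊤ : SimpleGraph (Fin n)).edgeSet →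
      F.card ≤ n - 2 →
      HasPerfect ((⊤ : SimpleGraph (Fin n)).deleteEdges ↑F) k ∨
        HasAlmost ((⊤ : SimpleGraph (Fin n)).deleteEdges ↑F) k := by
    intro F hFsub hFcard
    have hFnd : ∀ e ∈ F, ¬ e.IsDiag := by
      intro e he
      have := hFsub (Finset.mem_coe.mpr he)
      rwa [SimpleGraph.edgeSet_top] at this
    rcases Nat.even_or_odd n with hev | hodd
    · left
      obtain ⟨h, hle, hsupp, hsum⟩ := even_lemma (V := Fin n) k n Finset.univ F
        (by simp) hev (Or.inl (by rw [Fin'_univ]; omega))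
      exact to_perfect k F h hle (fun e he => ⟨(hsupp e he).1, (hsupp e he).2.1⟩)
        (fun v => hsum v (Finset.mem_univ v))
    · obtain ⟨m, hm⟩ := hodd
      right
      obtain ⟨h, hle, hsupp, u, hu, hall⟩ := odd_main k t ht ht1 F
        (by omega) (by rw [hcard]; exact ⟨m, hm⟩) hFnd (by omega)
      exact to_almost k F h hle hsupp u hu hall
  -- the killing vertex
  have hn0 : 0 < n := by omega
  set v0 : Fin n := ⟨0, hn0⟩ with hv0
  -- Part 3
  have part3 : ¬ HasPerfect ((⊤ : SimpleGraph (Fin n)).deleteEdges {e | v0 ∈ e}) k ∧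
      ¬ HasAlmost ((⊤ : SimpleGraph (Fin n)).deleteEdges {e | v0 ∈ e}) k := by
    apply no_pa k hk3
    intro e he
    rw [SimpleGraph.edgeSet_deleteEdges] at he
    exact he.2
  -- the star Finset
  set F0 : Finset (Sym2 (Fin n)) := (Finset.univ.erase v0).image (fun w => s(v0,w)) with hF0
  have hF0sub : ↑F0 ⊆ (⊤ : SimpleGraph (Fin n)).edgeSet := by
    intro e he
    rw [Finset.mem_coe, hF0, Finset.mem_image] at he
    obtain ⟨w, hw, rfl⟩ := he
    rw [SimpleGraph.edgeSet_top]
    show ¬ Sym2.IsDiag _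
    rw [Sym2.mk_isDiag_iff]
    exact fun hc => (Finset.mem_erase.mp hw).1 hc.symm
  have hF0card : F0.card = n - 1 := by
    rw [hF0, Finset.card_image_of_injOn, Finset.card_erase_of_mem (Finset.mem_univ _),
      Finset.card_univ, hcard]
    intro x hx y hy hxy
    rcases Sym2.eq_iff.mp hxy with ⟨-, h⟩ | ⟨h1, -⟩
    · exact h
    · exact absurd h1.symm (Finset.mem_erase.mp (Finset.mem_coe.mp hy)).1
  have hkill : ∀ e ∈ ((⊤ : SimpleGraph (Fin n)).deleteEdges (↑F0 : Set (Sym2 (Fin n)))).edgeSet,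
      v0 ∉ e := by
    intro e he hve
    rw [SimpleGraph.edgeSet_deleteEdges] at he
    have hnd : ¬ e.IsDiag := by
      have := he.1
      rwa [SimpleGraph.edgeSet_top] at this
    obtain ⟨w, hwv, rfl⟩ := exists_other hve hnd
    exact he.2 (Finset.mem_coe.mpr (Finset.mem_image.mpr
      ⟨w, Finset.mem_erase.mpr ⟨hwv, Finset.mem_univ w⟩, rfl⟩))
  have hnp := no_pa k hk3 _ v0 hkill
  -- Part 1
  have hmem : (n - 1) ∈ {j | ∃ F : Finset (Sym2 (Fin n)),
      ↑F ⊆ (⊤ : SimpleGraph (Fin n)).edgeSet ∧ F.card = j ∧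
      ¬ HasPerfect ((⊤ : SimpleGraph (Fin n)).deleteEdges ↑F) k ∧
      ¬ HasAlmost ((⊤ : SimpleGraph (Fin n)).deleteEdges ↑F) k} :=
    ⟨F0, hF0sub, hF0card, hnp.1, hnp.2⟩
  have hlb : ∀ b ∈ {j | ∃ F : Finset (Sym2 (Fin n)),
      ↑F ⊆ (⊤ : SimpleGraph (Fin n)).edgeSet ∧ F.card = j ∧
      ¬ HasPerfect ((⊤ : SimpleGraph (Fin n)).deleteEdges ↑F) k ∧
      ¬ HasAlmost ((⊤ : SimpleGraph (Fin n)).deleteEdges ↑F) k}, n - 1 ≤ b := by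
    rintro b ⟨F, h1, h2, h3, h4⟩
    by_contra hc
    push_neg at hc
    rcases part2 F h1 (by omega) with hp | ha
    · exact h3 hp
    · exact h4 ha
  refine ⟨le_antisymm (Nat.sInf_le hmem) (le_csInf ⟨_, hmem⟩ hlb), part2, v0, part3⟩
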